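/- For any simple graph Γ and vector of positive integers m, the rank of the adjacency matrix of Γ⊙m over ℝ equals the rank of the adjacency matrix of Γ over ℝ. -/

import Mathlib

open SimpleGraph

/-- The graph `Γ ⊙ m` obtained from `Γ` by multiplication of vertices. -/
def blowup {V : Type*} (G : SimpleGraph V) (m : V → ℕ) :
    SimpleGraph (Σ v : V, Fin (m v)) :=
  SimpleGraph.comap Sigma.fst G

instance {V : Type*} (G : SimpleGraph V) [DecidableRel G.Adj] (m : V → ℕ) :
    DecidableRel (blowup G m).Adj :=
  fun a b => inferInstanceAs (Decidable (G.Adj a.1 b.1))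


open Matrix in
lemma submatrix_eq_mul' {k l n o : Type*} [Fintype n] [Fintype o] [DecidableEq n] [DecidableEq o]
    (A : Matrix n o ℝ) (f : k → n) (g : l → o) :
    A.submatrix f g =
      (Matrix.of fun i v => if f i = v then (1:ℝ) else 0) * A *
      (Matrix.of fun v j => if v = g j then (1:ℝ) else 0) := by
  ext i j
  simp [Matrix.mul_apply, Finset.sum_ite_eq, Finset.sum_ite_eq']

open Matrix in
lemma rank_submatrix_le' {k l n o : Type*} [Fintype n] [Fintype o] [Fintype k] [Fintype l]
    [DecidableEq n] [DecidableEq o]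
    (A : Matrix n o ℝ) (f : k → n) (g : l → o) :
    (A.submatrix f g).rank ≤ A.rank := by
  rw [submatrix_eq_mul' A f g]
  exact le_trans (Matrix.rank_mul_le_left _ _) (Matrix.rank_mul_le_right _ _)

/-- For any simple graph `Γ` and any vector `m` of positive integers, the rank over `ℝ`
of the adjacency matrix of `Γ ⊙ m` equals that of the adjacency matrix of `Γ`. -/
theorem stmt_15 {V : Type*} [Fintype V] [DecidableEq V] (G : SimpleGraph V)
    [DecidableRel G.Adj] (m : V → ℕ) (hm : ∀ w, 0 < m w) :
    ((blowup G m).adjMatrix ℝ).rank = (G.adjMatrix ℝ).rank := by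
  have key : (blowup G m).adjMatrix ℝ =
      (G.adjMatrix ℝ).submatrix Sigma.fst Sigma.fst := by
    ext a b
    simp only [Matrix.submatrix_apply, adjMatrix_apply]
    simp [blowup]
  have key2 : G.adjMatrix ℝ =
      ((blowup G m).adjMatrix ℝ).submatrix (fun v => ⟨v, ⟨0, hm v⟩⟩)
        (fun v => (⟨v, ⟨0, hm v⟩⟩ : Σ v : V, Fin (m v))) := by
    ext a b
    simp only [Matrix.submatrix_apply, adjMatrix_apply]
    simp [blowup]
  refine le_antisymm ?_ ?_
  · rw [key]; exact rank_submatrix_le' _ _ _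
  · conv_lhs => rw [key2]
    exact rank_submatrix_le' _ _ _
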